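/- arXiv:1703.07252 — 3 statements merged into one kernel-verified Lean document; each statement's English description precedes it below -/
import Mathlib

section
/- Let R ∈ SO(3) with |R₃₃| ≥ ρ > 0. Then for all x ∈ R^3, |[R e₃]_× [e₃]_× x|² ≥ ρ² (x₁² + x₂²). -/
open Matrix

/-- The skew-symmetric cross-product matrix of `u ∈ ℝ³`. -/
def skew (u : Fin 3 → ℝ) : Matrix (Fin 3) (Fin 3) ℝ :=
  !![0, -u 2, u 1; u 2, 0, -u 0; -u 1, u 0, 0]

/-- The third standard basis vector of `ℝ³`. -/
def e3 : Fin 3 → ℝ := ![0, 0, 1]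

/-- Sum of squares of the components of a vector in `ℝ³` (the squared Euclidean norm). -/
def sq3 (u : Fin 3 → ℝ) : ℝ := u 0 ^ 2 + u 1 ^ 2 + u 2 ^ 2

/-- For `R ∈ SO(3)` with `|R₃₃| ≥ ρ > 0`:
`|[R e₃]_× [e₃]_× x|² ≥ ρ² (x₁² + x₂²)` for all `x ∈ ℝ³`. -/
theorem stmt5 (R : Matrix (Fin 3) (Fin 3) ℝ)
    (hO : Rᵀ * R = 1) (hdet : R.det = 1)
    (ρ : ℝ) (hρ : 0 < ρ) (hR33 : |R 2 2| ≥ ρ) (x : Fin 3 → ℝ) :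
    sq3 ((skew (R.mulVec e3) * skew e3).mulVec x) ≥ ρ ^ 2 * (x 0 ^ 2 + x 1 ^ 2) := by
  have h1 : ρ ^ 2 ≤ (R 2 2) ^ 2 := by
    nlinarith [abs_nonneg (R 2 2), sq_abs (R 2 2)]
  simp only [sq3, skew, e3, Matrix.mulVec, Matrix.mul_apply, Fin.sum_univ_three,
    Matrix.cons_val', Matrix.cons_val_zero, Matrix.cons_val_one, Matrix.head_cons,
    Matrix.empty_val', Matrix.cons_val_fin_one, Matrix.head_fin_const,
    Matrix.cons_val_two, Matrix.tail_cons, Matrix.of_apply, dotProduct,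
    Fin.isValue]
  nlinarith [sq_nonneg (R 0 2 * x 0 + R 1 2 * x 1), sq_nonneg (x 0), sq_nonneg (x 1), h1]
end

section
/- Let m ∈ S² with m₁² + m₂² > 0, let R ∈ SO(3) with |R₃₃| ≥ ρ > 0, and let c > 0. Then for all x ∈ R^3, |m × x|² + c |[R e₃]_× [e₃]_× x|² ≥ μ |x|² where μ := min( cρ²/2, (m₁² + m₂²) cρ² / (2 m₃² + cρ²) ) > 0. -/
open Matrix

lemma psd (s t d μ : ℝ) (hs : 0 < s) (hst : s + t^2 = 1) (hd : 0 < d)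
    (hμ0 : 0 ≤ μ) (hμ1 : 2*μ ≤ d) (hμ2 : μ*(2*t^2+d) ≤ s*d) :
    s*t^2 ≤ (t^2+d-μ)*(s-μ) := by
  have hs' : s = 1 - t^2 := by linarith
  subst hs'
  rcases le_or_gt d (2 - 4*t^2) with hcase | hcase
  · nlinarith [mul_nonneg (by linarith : (0:ℝ) ≤ d - 2*μ) (by linarith : (0:ℝ) ≤ 2 + d - 2*μ), hd.le, sq_nonneg t]
  · have hT : (0:ℝ) < 2*t^2 + d := by nlinarith [sq_nonneg t]
    have h2 : 0 ≤ (1-t^2)*d - μ*(2*t^2+d) := by linarith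
    have h3 : 0 ≤ (2*t^2+d)*(1+d-μ) - (1-t^2)*d := by nlinarith [sq_nonneg t]
    have hN1 : 0 ≤ (1-t^2)*d*t^2*(d+4*t^2-2) :=
      mul_nonneg (mul_nonneg (mul_nonneg hs.le hd.le) (sq_nonneg t)) (by linarith)
    have hid : (2*t^2+d)^2 * ((t^2+d-μ)*((1-t^2)-μ) - (1-t^2)*t^2) =
        (1-t^2)*d*t^2*(d+4*t^2-2) + ((1-t^2)*d - μ*(2*t^2+d))*((2*t^2+d)*(1+d-μ) - (1-t^2)*d) := by
      ring
    nlinarith [hid, mul_nonneg h2 h3, hN1, mul_pos hT hT]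

lemma key (s t d μ a v u : ℝ) (hs : 0 < s) (hst : s + t^2 = 1) (hd : 0 < d)
    (hμ0 : 0 ≤ μ) (hμ1 : 2*μ ≤ d) (hμ2 : μ*(2*t^2+d) ≤ s*d)
    (ha : u^2 ≤ s*a) :
    μ*(a+v^2) ≤ (1+d)*a + v^2 - (u+t*v)^2 := by
  have hP := psd s t d μ hs hst hd hμ0 hμ1 hμ2
  have hA : (0:ℝ) < t^2 + d - μ := by nlinarith [sq_nonneg t]
  have hbr : 0 ≤ (t^2+d-μ)*u^2 + s*(s-μ)*v^2 - 2*s*t*u*v := by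
    nlinarith [sq_nonneg ((t^2+d-μ)*u - s*t*v), mul_nonneg (mul_nonneg hs.le (by nlinarith : (0:ℝ) ≤ (t^2+d-μ)*(s-μ) - s*t^2)) (sq_nonneg v), hA]
  have h1 : (0:ℝ) ≤ (1+d-μ)*(s*a-u^2) :=
    mul_nonneg (by nlinarith : (0:ℝ) ≤ 1+d-μ) (by linarith)
  have hs' : s = 1 - t^2 := by linarith
  subst hs'
  have hid : (1-t^2)*((1+d)*a + v^2 - (u+t*v)^2 - μ*(a+v^2)) =
      (1+d-μ)*((1-t^2)*a-u^2) + ((t^2+d-μ)*u^2 + (1-t^2)*((1-t^2)-μ)*v^2 - 2*(1-t^2)*t*u*v) := by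
    ring
  nlinarith [hid, h1, hbr, hs]

/-- For a unit vector `m` not collinear with `e₃`, `R ∈ SO(3)` with `|R₃₃| ≥ ρ > 0`, `c > 0`:
`|m × x|² + c |[R e₃]_× [e₃]_× x|² ≥ μ |x|²` with
`μ := min(cρ²/2, (m₁²+m₂²)cρ²/(2m₃²+cρ²)) > 0`. -/
theorem stmt7 (m : Fin 3 → ℝ)
    (hm : m 0 ^ 2 + m 1 ^ 2 + m 2 ^ 2 = 1)
    (hnc : m 0 ^ 2 + m 1 ^ 2 > 0)
    (R : Matrix (Fin 3) (Fin 3) ℝ) (hO : Rᵀ * R = 1) (hdet : R.det = 1)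
    (ρ c : ℝ) (hρ : 0 < ρ) (hR33 : |R 2 2| ≥ ρ) (hc : 0 < c) :
    0 < min (c * ρ ^ 2 / 2) ((m 0 ^ 2 + m 1 ^ 2) * (c * ρ ^ 2) / (2 * m 2 ^ 2 + c * ρ ^ 2)) ∧
    ∀ x : Fin 3 → ℝ,
      sq3 (crossProduct m x) + c * sq3 ((skew (R.mulVec e3) * skew e3).mulVec x) ≥
        min (c * ρ ^ 2 / 2) ((m 0 ^ 2 + m 1 ^ 2) * (c * ρ ^ 2) / (2 * m 2 ^ 2 + c * ρ ^ 2))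
          * sq3 x := by
  have hd : (0:ℝ) < c * ρ ^ 2 := by positivity
  have hT : (0:ℝ) < 2 * m 2 ^ 2 + c * ρ ^ 2 := by positivity
  have hμpos : 0 < min (c * ρ ^ 2 / 2) ((m 0 ^ 2 + m 1 ^ 2) * (c * ρ ^ 2) / (2 * m 2 ^ 2 + c * ρ ^ 2)) :=
    lt_min (by positivity) (div_pos (by positivity) hT)
  refine ⟨hμpos, fun x => ?_⟩
  set μ := min (c * ρ ^ 2 / 2) ((m 0 ^ 2 + m 1 ^ 2) * (c * ρ ^ 2) / (2 * m 2 ^ 2 + c * ρ ^ 2)) with hμdef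
  have hμ1 : 2 * μ ≤ c * ρ ^ 2 := by
    have := min_le_left (c * ρ ^ 2 / 2) ((m 0 ^ 2 + m 1 ^ 2) * (c * ρ ^ 2) / (2 * m 2 ^ 2 + c * ρ ^ 2))
    rw [← hμdef] at this; linarith
  have hμ2 : μ * (2 * m 2 ^ 2 + c * ρ ^ 2) ≤ (m 0 ^ 2 + m 1 ^ 2) * (c * ρ ^ 2) := by
    have h := min_le_right (c * ρ ^ 2 / 2) ((m 0 ^ 2 + m 1 ^ 2) * (c * ρ ^ 2) / (2 * m 2 ^ 2 + c * ρ ^ 2))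
    rw [← hμdef] at h
    calc μ * (2 * m 2 ^ 2 + c * ρ ^ 2)
        ≤ ((m 0 ^ 2 + m 1 ^ 2) * (c * ρ ^ 2) / (2 * m 2 ^ 2 + c * ρ ^ 2)) * (2 * m 2 ^ 2 + c * ρ ^ 2) :=
          mul_le_mul_of_nonneg_right h hT.le
      _ = (m 0 ^ 2 + m 1 ^ 2) * (c * ρ ^ 2) := by field_simp
  have hcross : sq3 (crossProduct m x) =
      (x 0^2 + x 1^2 + x 2^2) - (m 0 * x 0 + m 1 * x 1 + m 2 * x 2)^2 := by
    simp [sq3, crossProduct]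
    linear_combination (x 0^2 + x 1^2 + x 2^2) * hm
  have hmat : sq3 ((skew (R.mulVec e3) * skew e3).mulVec x) =
      (R 2 2)^2 * (x 0^2 + x 1^2) + (R 0 2 * x 0 + R 1 2 * x 1)^2 := by
    simp [sq3, skew, e3, Matrix.mulVec, Matrix.mul_apply, Fin.sum_univ_three, dotProduct]
    ring
  have hρ2 : ρ^2 ≤ (R 2 2)^2 := by
    nlinarith [sq_abs (R 2 2), abs_nonneg (R 2 2)]
  have hmatge : c * sq3 ((skew (R.mulVec e3) * skew e3).mulVec x) ≥ c * ρ ^ 2 * (x 0^2 + x 1^2) := by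
    rw [hmat]
    nlinarith [mul_nonneg hc.le (sq_nonneg (R 0 2 * x 0 + R 1 2 * x 1)),
      mul_nonneg (mul_nonneg hc.le (sub_nonneg.2 hρ2)) (by positivity : (0:ℝ) ≤ x 0^2 + x 1^2)]
  have hu : (m 0 * x 0 + m 1 * x 1)^2 ≤ (m 0 ^ 2 + m 1 ^ 2) * (x 0^2 + x 1^2) := by
    nlinarith [sq_nonneg (m 0 * x 1 - m 1 * x 0)]
  have hkey := key (m 0 ^ 2 + m 1 ^ 2) (m 2) (c * ρ ^ 2) μ (x 0^2 + x 1^2) (x 2)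
    (m 0 * x 0 + m 1 * x 1) hnc (by linarith) hd hμpos.le hμ1 hμ2 hu
  have hsq3x : sq3 x = (x 0^2 + x 1^2) + (x 2)^2 := by simp [sq3]
  rw [ge_iff_le, hsq3x, hcross]
  linarith [hkey, hmatge]
end

section
/- Suppose the angular velocity Ω(t) ≡ 0, the attitude satisfies Ṙ = R[Ω]_× so R(t) ≡ R₀ is constant, |(R₀)₃₃| ≥ ρ > 0, v_max > 0 bounds |v(t)|, m ∈ S² is not collinear with e₃, and 0 < ε < g²ρ²/(2 v_max²). Then for all x, y ∈ R^3 and all t: |m × x|² + g²|[R₀e₃]_×[e₃]_× x|² - ε v_max²(x₁² + x₂²) + y₁² + y₂² + (ε/(1+ε))((R₀ᵀ e₃)ᵀ y)² ≥ μ(|x|² + |y|²) with μ := min( g²ρ²/2 - ε v_max², (m₁²+m₂²)g²ρ²/(2m₃²+g²ρ²), ερ²/(3(1+ε)) ) > 0. -/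
open Matrix

/-- y-part auxiliary inequality. -/
lemma aux_y (ε ρ q0 q1 q2 y0 y1 y2 : ℝ) (hε : 0 < ε)
    (hq : q0^2 + q1^2 + q2^2 = 1) (hq2 : ρ^2 ≤ q2^2) :
    (1+ε)*(y0^2+y1^2) + ε*(q0*y0+q1*y1+q2*y2)^2 ≥ ε*ρ^2/3*(y0^2+y1^2+y2^2) := by
  have hρ1 : ρ^2 ≤ 1 := by nlinarith [sq_nonneg q0, sq_nonneg q1]
  nlinarith [sq_nonneg (2*q2*y2 + 3*(q0*y0+q1*y1)), sq_nonneg (q0*y1 - q1*y0),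
    mul_nonneg hε.le (sq_nonneg y2), mul_nonneg hε.le (sq_nonneg (q0*y1-q1*y0)),
    mul_nonneg (mul_nonneg hε.le hε.le) (sq_nonneg y2),
    mul_nonneg hε.le (mul_nonneg (sub_nonneg.2 hq2) (sq_nonneg y2)),
    mul_nonneg hε.le (sq_nonneg y0), mul_nonneg hε.le (sq_nonneg y1)]

/-- x-part auxiliary inequality. -/
lemma aux_x (c m0 m1 m2 x0 x1 x2 : ℝ) (hc : 0 < c) :
    (2*m2^2+c) * ((m1*x2-m2*x1)^2 + (m2*x0-m0*x2)^2 + c/2*(x0^2+x1^2))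
      ≥ (m0^2+m1^2)*c*x2^2 := by
  rcases eq_or_ne m2 0 with h | h
  · subst h
    nlinarith [mul_nonneg (mul_nonneg hc.le hc.le) (sq_nonneg x0),
      mul_nonneg (mul_nonneg hc.le hc.le) (sq_nonneg x1)]
  · have h2 : 0 < 2*m2^2 := by positivity
    have key : 2*m2^2 * ((2*m2^2+c) * ((m1*x2-m2*x1)^2 + (m2*x0-m0*x2)^2 + c/2*(x0^2+x1^2))
        - (m0^2+m1^2)*c*x2^2)
        = (2*m2^2*(m1*x2-m2*x1) - c*(m2*x1))^2 + (2*m2^2*(m0*x2-m2*x0) - c*(m2*x0))^2 := by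
      ring
    have h3 : 0 ≤ 2*m2^2 * ((2*m2^2+c) * ((m1*x2-m2*x1)^2 + (m2*x0-m0*x2)^2 + c/2*(x0^2+x1^2))
        - (m0^2+m1^2)*c*x2^2) := key ▸ (by positivity)
    nlinarith [h3, h2]

set_option maxHeartbeats 1000000 in
/-- Pure-translation case of the instantaneous observability lemma: with `Ω ≡ 0`,
constant attitude `R(t) ≡ R₀ ∈ SO(3)` with `|(R₀)₃₃| ≥ ρ > 0`, `|v(t)| ≤ v_max`,
`m ∈ S²` not collinear with `e₃`, and `0 < ε < g²ρ²/(2v_max²)`, the quadratic form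
is bounded below by `μ(|x|² + |y|²)` with the indicated `μ > 0`. -/
theorem stmt13 (R₀ : Matrix (Fin 3) (Fin 3) ℝ)
    (hO : R₀ᵀ * R₀ = 1) (hdet : R₀.det = 1)
    (ρ g vmax ε : ℝ) (m : Fin 3 → ℝ)
    (hρ : 0 < ρ) (hR33 : |R₀ 2 2| ≥ ρ) (hg : 0 < g)
    (hm : m 0 ^ 2 + m 1 ^ 2 + m 2 ^ 2 = 1) (hnc : m 0 ^ 2 + m 1 ^ 2 > 0)
    (hvmax : 0 < vmax)
    (hε : 0 < ε) (hεsmall : ε < g ^ 2 * ρ ^ 2 / (2 * vmax ^ 2))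
    (Ω : ℝ → Fin 3 → ℝ) (hΩ : ∀ t : ℝ, Ω t = 0)
    (R : ℝ → Matrix (Fin 3) (Fin 3) ℝ) (hR : ∀ t : ℝ, R t = R₀)
    (v : ℝ → Fin 3 → ℝ) (hv : ∀ t : ℝ, Real.sqrt (sq3 (v t)) ≤ vmax) :
    0 < min (min (g ^ 2 * ρ ^ 2 / 2 - ε * vmax ^ 2)
              ((m 0 ^ 2 + m 1 ^ 2) * g ^ 2 * ρ ^ 2 / (2 * m 2 ^ 2 + g ^ 2 * ρ ^ 2)))
            (ε * ρ ^ 2 / (3 * (1 + ε))) ∧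
    ∀ (x y : Fin 3 → ℝ) (t : ℝ),
      sq3 (crossProduct m x) + g ^ 2 * sq3 ((skew (R₀.mulVec e3) * skew e3).mulVec x)
          - ε * vmax ^ 2 * (x 0 ^ 2 + x 1 ^ 2)
          + y 0 ^ 2 + y 1 ^ 2
          + (ε / (1 + ε)) *
              ((R₀ᵀ.mulVec e3) 0 * y 0 + (R₀ᵀ.mulVec e3) 1 * y 1
                + (R₀ᵀ.mulVec e3) 2 * y 2) ^ 2 ≥
        min (min (g ^ 2 * ρ ^ 2 / 2 - ε * vmax ^ 2)
              ((m 0 ^ 2 + m 1 ^ 2) * g ^ 2 * ρ ^ 2 / (2 * m 2 ^ 2 + g ^ 2 * ρ ^ 2)))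
            (ε * ρ ^ 2 / (3 * (1 + ε))) * (sq3 x + sq3 y) := by
  set A : ℝ := g ^ 2 * ρ ^ 2 / 2 - ε * vmax ^ 2 with hAdef
  set B : ℝ := (m 0 ^ 2 + m 1 ^ 2) * g ^ 2 * ρ ^ 2 / (2 * m 2 ^ 2 + g ^ 2 * ρ ^ 2) with hBdef
  set C : ℝ := ε * ρ ^ 2 / (3 * (1 + ε)) with hCdef
  clear_value A B C
  have hc : (0:ℝ) < g ^ 2 * ρ ^ 2 := by positivity
  have h1ε : (0:ℝ) < 1 + ε := by linarith
  have hden : (0:ℝ) < 2 * m 2 ^ 2 + g ^ 2 * ρ ^ 2 := by positivity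
  have hA : 0 < A := by
    have h := (lt_div_iff₀ (by positivity : (0:ℝ) < 2 * vmax ^ 2)).mp hεsmall
    rw [hAdef]; linarith only [h]
  have hB : 0 < B := by rw [hBdef]; exact div_pos (by positivity) hden
  have hC : 0 < C := by rw [hCdef]; positivity
  -- orthonormality facts
  have hRRT : R₀ * R₀ᵀ = 1 := mul_eq_one_comm.mp hO
  have hcol : R₀ 0 2 ^ 2 + R₀ 1 2 ^ 2 + R₀ 2 2 ^ 2 = 1 := by
    have := congrFun (congrFun hO 2) 2
    simpa [Matrix.mul_apply, Fin.sum_univ_three, Matrix.one_apply, sq] using this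
  have hrow : R₀ 2 0 ^ 2 + R₀ 2 1 ^ 2 + R₀ 2 2 ^ 2 = 1 := by
    have := congrFun (congrFun hRRT 2) 2
    simpa [Matrix.mul_apply, Fin.sum_univ_three, Matrix.one_apply, sq] using this
  have hρ2 : ρ ^ 2 ≤ R₀ 2 2 ^ 2 := by
    calc ρ ^ 2 ≤ |R₀ 2 2| ^ 2 := pow_le_pow_left₀ hρ.le hR33 2
    _ = R₀ 2 2 ^ 2 := sq_abs _
  refine ⟨lt_min (lt_min hA hB) hC, ?_⟩
  intro x y t
  set μ : ℝ := min (min A B) C with hμdef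
  clear_value μ
  have hμA : μ ≤ A := by rw [hμdef]; exact le_trans (min_le_left _ _) (min_le_left _ _)
  have hμB : μ ≤ B := by rw [hμdef]; exact le_trans (min_le_left _ _) (min_le_right _ _)
  have hμC : μ ≤ C := by rw [hμdef]; exact min_le_right _ _
  have hexp : sq3 (crossProduct m x) + g ^ 2 * sq3 ((skew (R₀.mulVec e3) * skew e3).mulVec x)
          - ε * vmax ^ 2 * (x 0 ^ 2 + x 1 ^ 2)
          + y 0 ^ 2 + y 1 ^ 2
          + (ε / (1 + ε)) *
              ((R₀ᵀ.mulVec e3) 0 * y 0 + (R₀ᵀ.mulVec e3) 1 * y 1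
                + (R₀ᵀ.mulVec e3) 2 * y 2) ^ 2
      = ((m 1 * x 2 - m 2 * x 1)^2 + (m 2 * x 0 - m 0 * x 2)^2 + (m 0 * x 1 - m 1 * x 0)^2
          + g^2 * ((R₀ 2 2)^2 * (x 0^2 + x 1^2) + (R₀ 0 2 * x 0 + R₀ 1 2 * x 1)^2)
          - ε * vmax ^ 2 * (x 0 ^ 2 + x 1 ^ 2))
        + (y 0 ^ 2 + y 1 ^ 2 + (ε / (1 + ε)) *
            (R₀ 2 0 * y 0 + R₀ 2 1 * y 1 + R₀ 2 2 * y 2) ^ 2) := by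
    simp [sq3, crossProduct, skew, e3, Matrix.mulVec, Matrix.mul_apply, dotProduct,
      Fin.sum_univ_three]
    ring
  rw [ge_iff_le, hexp]
  -- x-part
  have hQx : μ * sq3 x ≤ (m 1 * x 2 - m 2 * x 1)^2 + (m 2 * x 0 - m 0 * x 2)^2
      + (m 0 * x 1 - m 1 * x 0)^2
      + g^2 * ((R₀ 2 2)^2 * (x 0^2 + x 1^2) + (R₀ 0 2 * x 0 + R₀ 1 2 * x 1)^2)
      - ε * vmax ^ 2 * (x 0 ^ 2 + x 1 ^ 2) := by
    have hkey := aux_x (g^2*ρ^2) (m 0) (m 1) (m 2) (x 0) (x 1) (x 2) hc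
    have hT : B * x 2 ^ 2 ≤ (m 1 * x 2 - m 2 * x 1)^2 + (m 2 * x 0 - m 0 * x 2)^2
        + g^2*ρ^2/2*(x 0^2 + x 1^2) := by
      rw [hBdef, div_mul_eq_mul_div, div_le_iff₀ hden]
      linarith only [hkey]
    have hgr : g^2*ρ^2 * (x 0^2 + x 1^2) ≤ g^2 * (R₀ 2 2)^2 * (x 0^2 + x 1^2) := by
      have h1 : g^2*ρ^2 ≤ g^2 * (R₀ 2 2)^2 := by
        have := mul_le_mul_of_nonneg_left hρ2 (sq_nonneg g); linarith
      exact mul_le_mul_of_nonneg_right h1 (by positivity)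
    have hμx : μ * sq3 x ≤ A * (x 0^2 + x 1^2) + B * x 2 ^ 2 := by
      have h0 : (0:ℝ) ≤ x 0 ^ 2 + x 1 ^ 2 := by positivity
      have h1 : (0:ℝ) ≤ x 2 ^ 2 := sq_nonneg _
      have p1 := mul_nonneg (sub_nonneg.2 hμA) h0
      have p2 := mul_nonneg (sub_nonneg.2 hμB) h1
      simp only [sq3]
      linarith only [p1, p2]
    have hAmul : A * (x 0^2 + x 1^2)
        = g^2*ρ^2/2*(x 0^2 + x 1^2) - ε*vmax^2*(x 0^2 + x 1^2) := by rw [hAdef]; ring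
    have hg2 : (0:ℝ) ≤ g^2 * (R₀ 0 2 * x 0 + R₀ 1 2 * x 1)^2 := by positivity
    linarith only [hμx, hT, hgr, hAmul, hg2, sq_nonneg (m 0 * x 1 - m 1 * x 0)]
  -- y-part
  have hQy : μ * sq3 y ≤ y 0 ^ 2 + y 1 ^ 2 + (ε / (1 + ε)) *
      (R₀ 2 0 * y 0 + R₀ 2 1 * y 1 + R₀ 2 2 * y 2) ^ 2 := by
    have hkey := aux_y ε ρ (R₀ 2 0) (R₀ 2 1) (R₀ 2 2) (y 0) (y 1) (y 2) hε hrow hρ2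
    have hD : 0 ≤ (1+ε) * (y 0 ^ 2 + y 1 ^ 2 + (ε / (1 + ε)) *
        (R₀ 2 0 * y 0 + R₀ 2 1 * y 1 + R₀ 2 2 * y 2) ^ 2 - C * sq3 y) := by
      have e : (1+ε) * (y 0 ^ 2 + y 1 ^ 2 + (ε / (1 + ε)) *
          (R₀ 2 0 * y 0 + R₀ 2 1 * y 1 + R₀ 2 2 * y 2) ^ 2 - C * sq3 y)
          = (1+ε)*(y 0^2+y 1^2)
            + ε*(R₀ 2 0*y 0+R₀ 2 1*y 1+R₀ 2 2*y 2)^2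
            - ε*ρ^2/3*(y 0^2+y 1^2+y 2^2) := by
        rw [hCdef]; simp only [sq3]; field_simp
      rw [e]; linarith only [hkey]
    have hD2 : 0 ≤ y 0 ^ 2 + y 1 ^ 2 + (ε / (1 + ε)) *
        (R₀ 2 0 * y 0 + R₀ 2 1 * y 1 + R₀ 2 2 * y 2) ^ 2 - C * sq3 y :=
      nonneg_of_mul_nonneg_right hD h1ε
    have hsy : 0 ≤ sq3 y := by simp only [sq3]; positivity
    have p3 := mul_nonneg (sub_nonneg.2 hμC) hsy
    linarith only [p3, hD2]
  have : μ * (sq3 x + sq3 y) = μ * sq3 x + μ * sq3 y := by ring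
  rw [this]
  exact add_le_add hQx hQy
end
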